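/- If Z_1, …, Z_n are i.i.d. standard Gaussian random variables, then for all ε ∈ (0,1), P(|(1/n)∑_{i=1}^n Z_i² − 1| ≥ ε) ≤ 2·exp(−nε²/8). -/

import Mathlib

open MeasureTheory ProbabilityTheory Real Finset
open scoped ENNReal NNReal

lemma key_poly {u : ℝ} (hu : |u| ≤ 1/2) : 1 ≤ (1 - u) * Real.exp (u + u^2) := by
  rw [abs_le] at hu
  rcases le_or_gt u 0 with h | h
  · have h1 : u + u^2 + 1 ≤ Real.exp (u + u^2) := Real.add_one_le_exp _
    nlinarith [hu.1, hu.2]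
  · have h1 : 1 + (u + u^2) + (u + u^2)^2/2 ≤ Real.exp (u + u^2) :=
      Real.quadratic_le_exp_of_nonneg (by positivity)
    nlinarith [hu.2, h.le, sq_nonneg u]

lemma key_ineq {t : ℝ} (ht : |t| ≤ 1/4) :
    (Real.sqrt (1 - 2*t))⁻¹ ≤ Real.exp (t + 2*t^2) := by
  have habs := abs_le.mp ht
  have h12 : (0:ℝ) < 1 - 2*t := by linarith
  have hkey : 1 ≤ (1 - 2*t) * Real.exp (2*t + (2*t)^2) := by
    have := key_poly (u := 2*t) (by rw [abs_le]; constructor <;> linarith)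
    convert this using 3
  have hsq : Real.exp (-(t + 2*t^2)) ^ 2 ≤ 1 - 2*t := by
    have : Real.exp (-(t + 2*t^2)) ^ 2 = Real.exp (-(2*t + (2*t)^2)) := by
      rw [sq, ← Real.exp_add]; ring_nf
    rw [this, Real.exp_neg, inv_le_comm₀ (Real.exp_pos _) h12]
    rw [inv_le_iff_one_le_mul₀ h12]
    linarith [hkey]
  have hle : Real.exp (-(t + 2*t^2)) ≤ Real.sqrt (1 - 2*t) :=
    (Real.le_sqrt (Real.exp_pos _).le (by linarith)).mpr hsq
  rw [Real.exp_neg] at hle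
  calc (Real.sqrt (1 - 2*t))⁻¹ ≤ ((Real.exp (t + 2*t^2))⁻¹)⁻¹ := by
        exact inv_anti₀ (by positivity) hle
    _ = Real.exp (t + 2*t^2) := inv_inv _

lemma gaussian_withDensity :
    gaussianReal 0 1 = volume.withDensity
      (fun x => ((gaussianPDFReal 0 1 x).toNNReal : ℝ≥0∞)) := by
  rw [gaussianReal_of_var_ne_zero _ one_ne_zero]
  rfl

lemma pdf_mul_eq {t : ℝ} (x : ℝ) :
    gaussianPDFReal 0 1 x * Real.exp (t * x^2)
      = (Real.sqrt (2*π))⁻¹ * Real.exp (-(1/2 - t) * x^2) := by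
  simp only [gaussianPDFReal, NNReal.coe_one, mul_one, sub_zero]
  rw [mul_assoc, ← Real.exp_add]
  congr 2
  ring

lemma integrable_exp_sq_gaussian {t : ℝ} (ht : t < 1/2) :
    Integrable (fun x => Real.exp (t * x^2)) (gaussianReal 0 1) := by
  rw [gaussian_withDensity, integrable_withDensity_iff_integrable_smul
    (measurable_gaussianPDFReal 0 1).real_toNNReal]
  have : (fun x => ((gaussianPDFReal 0 1 x).toNNReal : ℝ≥0) • Real.exp (t * x^2))
      = fun x => (Real.sqrt (2*π))⁻¹ * Real.exp (-(1/2 - t) * x^2) := by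
    ext x
    rw [NNReal.smul_def, smul_eq_mul, Real.coe_toNNReal _ (gaussianPDFReal_nonneg 0 1 x),
      pdf_mul_eq]
  rw [this]
  exact (integrable_exp_neg_mul_sq (by linarith)).const_mul _

lemma integral_exp_sq_gaussian {t : ℝ} (ht : t < 1/2) :
    ∫ x, Real.exp (t * x^2) ∂(gaussianReal 0 1) = (Real.sqrt (1 - 2*t))⁻¹ := by
  rw [gaussian_withDensity,
    integral_withDensity_eq_integral_smul (measurable_gaussianPDFReal 0 1).real_toNNReal]
  have : (fun x => ((gaussianPDFReal 0 1 x).toNNReal : ℝ≥0) • Real.exp (t * x^2))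
      = fun x => (Real.sqrt (2*π))⁻¹ * Real.exp (-(1/2 - t) * x^2) := by
    ext x
    rw [NNReal.smul_def, smul_eq_mul, Real.coe_toNNReal _ (gaussianPDFReal_nonneg 0 1 x),
      pdf_mul_eq]
  rw [this, integral_const_mul, integral_gaussian, ← Real.sqrt_inv, ← Real.sqrt_mul (by positivity),
    show (2*π)⁻¹ * (π / (1/2 - t)) = (1 - 2*t)⁻¹ by
      have hb : (1:ℝ)/2 - t ≠ 0 := by linarith
      have hπ : π ≠ 0 := pi_ne_zero
      have h2 : (1:ℝ) - 2*t ≠ 0 := by linarith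
      field_simp,
    Real.sqrt_inv]

/-- Chi-square concentration for i.i.d. standard Gaussians. -/
theorem chi_square_concentration
    {Ω : Type*} [MeasurableSpace Ω] (μ : Measure Ω) [IsProbabilityMeasure μ]
    (n : ℕ) (hn : 0 < n) (Z : Fin n → Ω → ℝ)
    (hmeas : ∀ i, Measurable (Z i))
    (hindep : iIndepFun Z μ)
    (hgauss : ∀ i, Measure.map (Z i) μ = gaussianReal 0 1)
    (ε : ℝ) (hε0 : 0 < ε) (hε1 : ε < 1) :
    μ {ω | ε ≤ |(1 / (n : ℝ)) * ∑ i, (Z i ω) ^ 2 - 1|}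
      ≤ ENNReal.ofReal (2 * Real.exp (-(n : ℝ) * ε ^ 2 / 8)) := by
  have hn' : (0:ℝ) < n := Nat.cast_pos.mpr hn
  set X : Fin n → Ω → ℝ := fun i ω => (Z i ω)^2 with hX
  have hmeasX : ∀ i, Measurable (X i) := fun i => (hmeas i).pow_const 2
  have hindepX : iIndepFun X μ :=
    hindep.comp (fun _ => fun x : ℝ => x^2) (fun _ => measurable_id.pow_const 2)
  -- integrability and mgf for |t| ≤ 1/4
  have hintX : ∀ t : ℝ, t < 1/2 → ∀ i, Integrable (fun ω => rexp (t * X i ω)) μ := by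
    intro t ht i
    have hm : Measurable fun x : ℝ => rexp (t * x^2) := by fun_prop
    have h : Integrable ((fun x => rexp (t * x^2)) ∘ (Z i)) μ := by
      rw [← integrable_map_measure hm.aestronglyMeasurable (hmeas i).aemeasurable, hgauss i]
      exact integrable_exp_sq_gaussian ht
    exact h
  have hmgfX : ∀ t : ℝ, t < 1/2 → ∀ i, mgf (X i) μ t = (Real.sqrt (1 - 2*t))⁻¹ := by
    intro t ht i
    have hm : Measurable fun x : ℝ => rexp (t * x^2) := by fun_prop
    have h : mgf (X i) μ t = ∫ x, rexp (t * x^2) ∂(Measure.map (Z i) μ) := by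
      rw [integral_map (hmeas i).aemeasurable hm.aestronglyMeasurable]
      rfl
    rw [h, hgauss i, integral_exp_sq_gaussian ht]
  have hmgf_sum : ∀ t : ℝ, t < 1/2 →
      mgf (∑ i, X i) μ t = ((Real.sqrt (1 - 2*t))⁻¹) ^ n := by
    intro t ht
    rw [hindepX.mgf_sum hmeasX]
    simp_rw [hmgfX t ht]
    rw [prod_const, card_univ, Fintype.card_fin]
  have hbound : ∀ t : ℝ, |t| ≤ 1/4 →
      mgf (∑ i, X i) μ t ≤ rexp ((n:ℝ) * (t + 2*t^2)) := by
    intro t ht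
    have ht2 : t < 1/2 := by have := (abs_le.mp ht).2; linarith
    rw [hmgf_sum t ht2]
    calc ((Real.sqrt (1 - 2*t))⁻¹) ^ n ≤ (rexp (t + 2*t^2)) ^ n := by
          apply pow_le_pow_left₀ (by positivity) (key_ineq ht)
      _ = rexp ((n:ℝ) * (t + 2*t^2)) := by rw [← Real.exp_nat_mul]
  -- upper tail
  have ht1 : |ε/4| ≤ 1/4 := by rw [abs_of_pos (by linarith)]; linarith
  have ht1' : ε/4 < 1/2 := by linarith
  have hA : (μ {ω | (1+ε) * n ≤ (∑ i, X i) ω}).toReal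
      ≤ Real.exp (-(n : ℝ) * ε ^ 2 / 8) := by
    have h := measure_ge_le_exp_mul_mgf (μ := μ) (X := ∑ i, X i) ((1+ε) * n)
      (t := ε/4) (by linarith) (hindepX.integrable_exp_mul_sum hmeasX (fun i _ => hintX _ ht1' i))
    refine h.trans ?_
    calc rexp (-(ε/4) * ((1+ε) * n)) * mgf (∑ i, X i) μ (ε/4)
        ≤ rexp (-(ε/4) * ((1+ε) * n)) * rexp ((n:ℝ) * (ε/4 + 2*(ε/4)^2)) := by
          exact mul_le_mul_of_nonneg_left (hbound _ ht1) (Real.exp_pos _).le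
      _ = Real.exp (-(n : ℝ) * ε ^ 2 / 8) := by rw [← Real.exp_add]; congr 1; ring
  -- lower tail
  have ht2 : |(-(ε/4))| ≤ 1/4 := by rw [abs_neg]; exact ht1
  have ht2' : -(ε/4) < 1/2 := by linarith
  have hB : (μ {ω | (∑ i, X i) ω ≤ (1-ε) * n}).toReal
      ≤ Real.exp (-(n : ℝ) * ε ^ 2 / 8) := by
    have h := measure_le_le_exp_mul_mgf (μ := μ) (X := ∑ i, X i) ((1-ε) * n)
      (t := -(ε/4)) (by linarith) (hindepX.integrable_exp_mul_sum hmeasX (fun i _ => hintX _ ht2' i))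
    refine h.trans ?_
    calc rexp (-(-(ε/4)) * ((1-ε) * n)) * mgf (∑ i, X i) μ (-(ε/4))
        ≤ rexp (-(-(ε/4)) * ((1-ε) * n)) * rexp ((n:ℝ) * (-(ε/4) + 2*(-(ε/4))^2)) := by
          exact mul_le_mul_of_nonneg_left (hbound _ ht2) (Real.exp_pos _).le
      _ = Real.exp (-(n : ℝ) * ε ^ 2 / 8) := by rw [← Real.exp_add]; congr 1; ring
  -- set inclusion
  have hsub : {ω | ε ≤ |(1 / (n : ℝ)) * ∑ i, (Z i ω) ^ 2 - 1|}
      ⊆ {ω | (1+ε) * n ≤ (∑ i, X i) ω} ∪ {ω | (∑ i, X i) ω ≤ (1-ε) * n} := by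
    intro ω hω
    simp only [Set.mem_setOf_eq, Set.mem_union, Finset.sum_apply] at hω ⊢
    have hXZ : ∀ c, X c ω = (Z c ω)^2 := fun c => rfl
    simp only [hXZ]
    have hinv : (1 / (n : ℝ)) * (∑ i, (Z i ω) ^ 2) * n = ∑ i, (Z i ω) ^ 2 := by
      field_simp
    rcases le_abs.mp hω with h | h
    · left
      have h1 : (1 + ε) ≤ (1 / (n : ℝ)) * ∑ i, (Z i ω) ^ 2 := by linarith
      have h2 := mul_le_mul_of_nonneg_right h1 hn'.le
      rwa [hinv] at h2
    · right
      have h1 : (1 / (n : ℝ)) * (∑ i, (Z i ω) ^ 2) ≤ 1 - ε := by linarith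
      have h2 := mul_le_mul_of_nonneg_right h1 hn'.le
      rwa [hinv] at h2
  calc μ {ω | ε ≤ |(1 / (n : ℝ)) * ∑ i, (Z i ω) ^ 2 - 1|}
      ≤ μ ({ω | (1+ε) * n ≤ (∑ i, X i) ω} ∪ {ω | (∑ i, X i) ω ≤ (1-ε) * n}) :=
        measure_mono hsub
    _ ≤ μ {ω | (1+ε) * n ≤ (∑ i, X i) ω} + μ {ω | (∑ i, X i) ω ≤ (1-ε) * n} :=
        measure_union_le _ _
    _ ≤ ENNReal.ofReal (Real.exp (-(n : ℝ) * ε ^ 2 / 8))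
        + ENNReal.ofReal (Real.exp (-(n : ℝ) * ε ^ 2 / 8)) := by
        gcongr
        · exact (ENNReal.le_ofReal_iff_toReal_le (measure_ne_top μ _) (Real.exp_pos _).le).mpr hA
        · exact (ENNReal.le_ofReal_iff_toReal_le (measure_ne_top μ _) (Real.exp_pos _).le).mpr hB
    _ = ENNReal.ofReal (2 * Real.exp (-(n : ℝ) * ε ^ 2 / 8)) := by
        rw [← ENNReal.ofReal_add (Real.exp_pos _).le (Real.exp_pos _).le]
        congr 1
        ring
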